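/- Under the standing assumptions (positive symmetric density and strictly increasing hazard ratio F/f), the static equilibrium profit function H(x) = (1 − F(x))²/f(x) is strictly decreasing on ℝ. -/

import Mathlib

/-- Under the standing assumptions (positive symmetric
density and strictly increasing hazard ratio `F/f`), the static
equilibrium profit function `H x = (1 − F x)² / f x` is strictly
decreasing on `ℝ`. -/
theorem static_profit_strictAnti (F f : ℝ → ℝ)
    (hF_deriv : ∀ x, HasDerivAt F (f x) x)
    (hf_cont : Continuous f)
    (hf_pos : ∀ x, 0 < f x)
    (hf_symm : ∀ x, f (-x) = f x)
    (hF_mono : Monotone F)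
    (hF_bot : Filter.Tendsto F Filter.atBot (nhds 0))
    (hF_top : Filter.Tendsto F Filter.atTop (nhds 1))
    (hMHR : StrictMono (fun x => F x / f x)) :
    StrictAnti (fun x => (1 - F x) ^ 2 / f x) := by
  -- F is strictly monotone
  have hFsm : StrictMono F := by
    apply strictMono_of_deriv_pos
    intro x
    rw [(hF_deriv x).deriv]
    exact hf_pos x
  -- g x = F x + F (-x) has zero derivative
  set g : ℝ → ℝ := fun x => F x + F (-x) with hg_def
  have hg : ∀ x, HasDerivAt g 0 x := by
    intro x
    have h1 : HasDerivAt (fun x : ℝ => F (-x)) (f (-x) * (-1)) x :=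
      (hF_deriv (-x)).comp x (hasDerivAt_neg x)
    have := (hF_deriv x).add h1
    rw [hf_symm x] at this
    rw [show f x + f x * -1 = 0 by ring] at this
    exact this
  have hg_const : ∀ x y, g x = g y := fun x y =>
    is_const_of_deriv_eq_zero (fun z => (hg z).differentiableAt)
      (fun z => (hg z).deriv) x y
  -- g tends to 1 at atTop
  have hg_top : Filter.Tendsto g Filter.atTop (nhds 1) := by
    have h2 : Filter.Tendsto (fun x : ℝ => F (-x)) Filter.atTop (nhds 0) :=
      hF_bot.comp Filter.tendsto_neg_atTop_atBot
    simpa using hF_top.add h2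
  have key : ∀ x, F (-x) = 1 - F x := by
    intro x
    have hconst : Filter.Tendsto g Filter.atTop (nhds (g x)) := by
      have : g = fun _ => g x := funext fun y => hg_const y x
      rw [this]; exact tendsto_const_nhds
    have := tendsto_nhds_unique hconst hg_top
    simp only [hg_def] at this
    linarith
  -- F x < 1
  have hFlt : ∀ x, F x < 1 := by
    intro x
    have h1 : F x < F (x + 1) := hFsm (by linarith)
    have h2 : F (x + 1) ≤ 1 := hF_mono.ge_of_tendsto hF_top (x + 1)
    linarith
  have hpos : ∀ x, 0 < 1 - F x := fun x => by linarith [hFlt x]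
  -- the ratio (1 - F x) / f x is strictly decreasing
  have hratio : StrictAnti (fun x => (1 - F x) / f x) := by
    have : (fun x => (1 - F x) / f x) = (fun x => F x / f x) ∘ Neg.neg := by
      funext x
      simp only [Function.comp_apply, key x, hf_symm x]
    rw [this]
    exact hMHR.comp_strictAnti fun a b hab => by simpa using neg_lt_neg hab
  intro x y hxy
  have hax : 0 < (1 - F x) / f x := div_pos (hpos x) (hf_pos x)
  have hay : 0 < (1 - F y) / f y := div_pos (hpos y) (hf_pos y)
  have h1 : (1 - F y) < (1 - F x) := by linarith [hFsm hxy]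
  have h2 : (1 - F y) / f y < (1 - F x) / f x := hratio hxy
  have := mul_lt_mul'' h1 h2 (le_of_lt (hpos y)) (le_of_lt hay)
  calc (1 - F y) ^ 2 / f y = (1 - F y) * ((1 - F y) / f y) := by ring
    _ < (1 - F x) * ((1 - F x) / f x) := this
    _ = (1 - F x) ^ 2 / f x := by ring
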